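/- Let h : X* → ℝ ∪ {+∞} be a convex function and r > inf_{X*} h. Then {x* : (cl^{w*} h)(x*) ≤ r} equals the weak*-closure of {x* : h(x*) < r}. -/

import Mathlib

open Filter Topology Set

/-- The weak*-lower semicontinuous hull of a function `h : X* → ℝ ∪ {+∞}` on the dual of a
locally convex space `X` (the dual being endowed with its weak* topology): the largest
weak*-lsc function below `h`. -/
noncomputable def wstarLscHull {X : Type*} [AddCommGroup X] [Module ℝ X] [TopologicalSpace X]
    (h : WeakDual ℝ X → EReal) : WeakDual ℝ X → EReal :=
  fun p => ⨆ g : {g : WeakDual ℝ X → EReal // LowerSemicontinuous g ∧ g ≤ h}, g.1 p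

/-- For a convex function `h : X* → ℝ ∪ {+∞}` and a real `r` with `r > inf_{X*} h`, the
sublevel set `{x* : (cl^{w*} h)(x*) ≤ r}` equals the weak*-closure of `{x* : h(x*) < r}`. -/
theorem sublevel_of_wstarLscHull_eq_closure
    {X : Type*} [AddCommGroup X] [Module ℝ X] [TopologicalSpace X]
    [IsTopologicalAddGroup X] [ContinuousSMul ℝ X] [LocallyConvexSpace ℝ X]
    (h : WeakDual ℝ X → EReal)
    (hconv : Convex ℝ {p : WeakDual ℝ X × ℝ | h p.1 ≤ (p.2 : EReal)})
    (r : ℝ) (hr : (⨅ p : WeakDual ℝ X, h p) < (r : EReal)) :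
    {p : WeakDual ℝ X | wstarLscHull h p ≤ (r : EReal)} =
      closure {p : WeakDual ℝ X | h p < (r : EReal)} := by
  set E : Set (WeakDual ℝ X × ℝ) := {p : WeakDual ℝ X × ℝ | h p.1 ≤ (p.2 : EReal)} with hE
  -- the closure of E is "upward closed" in the second coordinate
  have hup : ∀ (q : WeakDual ℝ X) (s t : ℝ), s ≤ t → (q, s) ∈ closure E → (q, t) ∈ closure E := by
    intro q s t hst hsE
    have hcont : Continuous (fun z : WeakDual ℝ X × ℝ => (z.1, z.2 + (t - s))) :=
      continuous_fst.prodMk (continuous_snd.add continuous_const)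
    have hmaps : MapsTo (fun z : WeakDual ℝ X × ℝ => (z.1, z.2 + (t - s))) E E := by
      intro z hz
      simp only [hE, mem_setOf_eq] at hz ⊢
      refine hz.trans ?_
      exact_mod_cast EReal.coe_le_coe_iff.mpr (by linarith)
    have := map_mem_closure hcont hsE hmaps
    simpa [show s + (t - s) = t by ring] using this
  -- the function whose closure-epigraph is `closure E`
  set f : WeakDual ℝ X → EReal :=
    fun q => ⨅ s : {s : ℝ // (q, s) ∈ closure E}, ((s : ℝ) : EReal) with hf
  have hfle : f ≤ h := by
    intro q
    by_contra hlt
    push_neg at hlt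
    obtain ⟨c, hc1, hc2⟩ := EReal.exists_between_coe_real hlt
    have : (q, c) ∈ closure E := subset_closure (le_of_lt hc1)
    exact absurd (iInf_le (fun s : {s : ℝ // (q, s) ∈ closure E} => ((s : ℝ) : EReal)) ⟨c, this⟩)
      (not_le.mpr hc2)
  have hflsc : LowerSemicontinuous f := by
    intro p a ha
    obtain ⟨b, hab, hbf⟩ := EReal.exists_between_coe_real ha
    have hbnot : (p, b) ∉ closure E := by
      intro hmem
      exact absurd (iInf_le (fun s : {s : ℝ // (p, s) ∈ closure E} => ((s : ℝ) : EReal)) ⟨b, hmem⟩)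
        (not_le.mpr hbf)
    obtain ⟨u, v, hu, hv, hpu, hbv, huv⟩ :=
      isOpen_prod_iff.mp (isOpen_compl_iff.mpr isClosed_closure) p b hbnot
    filter_upwards [hu.mem_nhds hpu] with q hq
    have hfq : (b : EReal) ≤ f q := by
      refine le_iInf fun s => ?_
      by_contra hsb
      push_neg at hsb
      have hsb' : (s : ℝ) ≤ b := le_of_lt (EReal.coe_lt_coe_iff.mp hsb)
      exact huv (mk_mem_prod hq hbv) (hup q s b hsb' s.2)
    exact lt_of_lt_of_le hab hfq
  -- f is below the hull
  have hfhull : ∀ p, f p ≤ wstarLscHull h p := fun p =>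
    le_iSup (fun g : {g : WeakDual ℝ X → EReal // LowerSemicontinuous g ∧ g ≤ h} => g.1 p)
      ⟨f, hflsc, hfle⟩
  -- point with small value
  obtain ⟨q₀, hq₀⟩ := iInf_lt_iff.mp hr
  obtain ⟨s₀, hs₀1, hs₀2⟩ := EReal.exists_between_coe_real hq₀
  have hs₀r : s₀ < r := EReal.coe_lt_coe_iff.mp hs₀2
  have hq₀E : (q₀, s₀) ∈ E := le_of_lt hs₀1
  -- key: a point of closure E with second coordinate < r projects into closure {h < r}
  have key : ∀ z : WeakDual ℝ X × ℝ, z ∈ closure E → z.2 < r →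
      z.1 ∈ closure {p : WeakDual ℝ X | h p < (r : EReal)} := by
    intro z hz hz2
    rw [mem_closure_iff]
    intro o ho hzo
    have hW : z ∈ o ×ˢ Iio r := mk_mem_prod hzo hz2
    obtain ⟨w, hw1, hw2⟩ := mem_closure_iff.mp hz (o ×ˢ Iio r) (ho.prod isOpen_Iio) hW
    refine ⟨w.1, hw1.1, ?_⟩
    have : h w.1 ≤ (w.2 : EReal) := hw2
    exact lt_of_le_of_lt this (EReal.coe_lt_coe_iff.mpr hw1.2)
  have hclconv : Convex ℝ (closure E) := hconv.closure
  apply Subset.antisymm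
  · -- hard inclusion
    intro p hp
    have hfp : f p ≤ (r : EReal) := (hfhull p).trans hp
    -- (p, b) ∈ closure E for every b > r
    have hb : ∀ b : ℝ, r < b → (p, b) ∈ closure E := by
      intro b hbr
      have : f p < (b : EReal) := lt_of_le_of_lt hfp (EReal.coe_lt_coe_iff.mpr hbr)
      obtain ⟨s, hs⟩ := iInf_lt_iff.mp this
      exact hup p s b (le_of_lt (EReal.coe_lt_coe_iff.mp hs)) s.2
    -- hence (p, r) ∈ closure E
    have hpr : (p, r) ∈ closure E := by
      have hcont : Continuous (fun b : ℝ => ((p, b) : WeakDual ℝ X × ℝ)) :=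
        continuous_const.prodMk continuous_id
      have hmaps : MapsTo (fun b : ℝ => ((p, b) : WeakDual ℝ X × ℝ)) (Ioi r) (closure E) :=
        fun b hbr => hb b hbr
      have hrcl : r ∈ closure (Ioi r) := by rw [closure_Ioi]; exact self_mem_Ici
      simpa using map_mem_closure hcont hrcl hmaps
    -- segment points
    have hseg : ∀ t : ℝ, 0 < t → t ≤ 1 →
        t • q₀ + (1 - t) • p ∈ closure {p : WeakDual ℝ X | h p < (r : EReal)} := by
      intro t ht0 ht1
      have hz : t • ((q₀, s₀) : WeakDual ℝ X × ℝ) + (1 - t) • ((p, r) : WeakDual ℝ X × ℝ)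
          ∈ closure E :=
        hclconv (subset_closure hq₀E) hpr (le_of_lt ht0) (by linarith) (by ring)
      have h2 : t * s₀ + (1 - t) * r < r := by nlinarith
      have := key _ hz (by simpa using h2)
      simpa using this
    -- take the limit as t → 0
    have htend : Tendsto
        (fun n : ℕ => ((n + 1 : ℝ))⁻¹ • q₀ + ((1 : ℝ) - ((n + 1 : ℝ))⁻¹) • p)
        atTop (𝓝 p) := by
      have h0 : Tendsto (fun n : ℕ => ((n + 1 : ℝ))⁻¹) atTop (𝓝 0) := by
        simpa [one_div] using tendsto_one_div_add_atTop_nhds_zero_nat (𝕜 := ℝ)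
      have hc : Continuous (fun t : ℝ => t • q₀ + (1 - t) • p) :=
        (continuous_id.smul continuous_const).add
          ((continuous_const.sub continuous_id).smul continuous_const)
      have := (hc.tendsto 0).comp h0
      simpa [Function.comp_def, one_div] using this
    have hmem : ∀ n : ℕ, ((n + 1 : ℝ))⁻¹ • q₀ + ((1 : ℝ) - ((n + 1 : ℝ))⁻¹) • p
        ∈ closure {p : WeakDual ℝ X | h p < (r : EReal)} := by
      intro n
      refine hseg _ (by positivity) ?_
      rw [inv_le_one_iff₀]
      right
      linarith [Nat.cast_nonneg (α := ℝ) n]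
    have := mem_closure_of_tendsto htend (Eventually.of_forall hmem)
    rwa [closure_closure] at this
  · -- easy inclusion
    refine closure_minimal ?_ ?_
    · intro p hp
      have : wstarLscHull h p ≤ h p := iSup_le fun g => g.2.2 p
      exact le_of_lt (lt_of_le_of_lt this hp)
    · have : {p : WeakDual ℝ X | wstarLscHull h p ≤ (r : EReal)} =
          ⋂ g : {g : WeakDual ℝ X → EReal // LowerSemicontinuous g ∧ g ≤ h},
            {p : WeakDual ℝ X | g.1 p ≤ (r : EReal)} := by
        ext p
        simp only [mem_setOf_eq, mem_iInter, wstarLscHull, iSup_le_iff]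
      rw [this]
      exact isClosed_iInter fun g => g.2.1.isClosed_preimage (r : EReal)
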